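/- arXiv:1310.1662 — 2 statements merged into one kernel-verified Lean document; each statement's English description precedes it below -/
import Mathlib

section
/- Define h(τ) = θ_{(0,0)}(4τ)² · θ_{(0,1)}(4τ)² · θ_{(1,0)}(4τ)² for τ in the complex upper half plane. Then for every matrix [[a, b], [c, d]] ∈ SL₂(ℤ) with 16 ∣ c, one has h((aτ + b)/(cτ + d)) = χ_{−1}(d) · (cτ + d)³ · h(τ), where χ_{−1}(d) = 1 if d ≡ 1 (mod 4) and χ_{−1}(d) = −1 if d ≡ 3 (mod 4). In other words, h is a modular form of weight 3 for Γ₀(16) with nebentypus χ_{−1}. -/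
open Complex

/-- The genus-one theta constant
`θ_{(a,b)}(τ) = ∑_{n ∈ ℤ} exp(πiτ(n + a/2)² + πi(n + a/2)b)`. -/
noncomputable def theta1 (a b : ℤ) (τ : ℂ) : ℂ :=
  ∑' n : ℤ, Complex.exp (Real.pi * I * τ * ((n : ℂ) + (a : ℂ) / 2) ^ 2 +
    Real.pi * I * ((n : ℂ) + (a : ℂ) / 2) * (b : ℂ))

/-- The modular form `h(τ) = θ_{(0,0)}(4τ)² θ_{(0,1)}(4τ)² θ_{(1,0)}(4τ)²`. -/
noncomputable def hForm (τ : ℂ) : ℂ :=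
  theta1 0 0 (4 * τ) ^ 2 * theta1 0 1 (4 * τ) ^ 2 * theta1 1 0 (4 * τ) ^ 2

noncomputable def Gfun (σ : ℂ) : ℂ :=
  theta1 0 0 σ ^ 2 * theta1 0 1 σ ^ 2 * theta1 1 0 σ ^ 2

lemma hForm_eq (τ : ℂ) : hForm τ = Gfun (4 * τ) := rfl

lemma theta00_eq (σ : ℂ) : theta1 0 0 σ = jacobiTheta₂ 0 σ := by
  unfold theta1 jacobiTheta₂ jacobiTheta₂_term
  refine tsum_congr fun n => ?_
  congr 1
  push_cast
  ring

lemma theta01_eq (σ : ℂ) : theta1 0 1 σ = jacobiTheta₂ (1 / 2) σ := by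
  unfold theta1 jacobiTheta₂ jacobiTheta₂_term
  refine tsum_congr fun n => ?_
  congr 1
  push_cast
  ring

lemma theta10_eq (σ : ℂ) :
    theta1 1 0 σ = cexp (Real.pi * I * σ / 4) * jacobiTheta₂ (σ / 2) σ := by
  unfold theta1 jacobiTheta₂ jacobiTheta₂_term
  rw [← tsum_mul_left]
  refine tsum_congr fun n => ?_
  rw [← Complex.exp_add]
  congr 1
  push_cast
  ring

section Translation

variable (σ : ℂ)

lemma evenk (n : ℤ) : ∃ k : ℤ, (n:ℂ)^2 - n = k + k := by
  obtain ⟨k, hk⟩ : Even (n^2 - n) := by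
    rw [Int.even_sub]
    simp [Int.even_pow]
  exact ⟨k, by exact_mod_cast congrArg (Int.cast : ℤ → ℂ) hk⟩

lemma theta00_T : theta1 0 0 (σ + 1) = theta1 0 1 σ := by
  unfold theta1
  refine tsum_congr fun n => ?_
  obtain ⟨k, hk⟩ := evenk n
  have h : (Real.pi:ℂ) * I * (σ+1) * ((n:ℂ) + (0:ℤ) / 2) ^ 2 +
      Real.pi * I * ((n:ℂ) + (0:ℤ) / 2) * ((0:ℤ):ℂ) =
      ((Real.pi:ℂ) * I * σ * ((n:ℂ) + (0:ℤ) / 2) ^ 2 +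
      Real.pi * I * ((n:ℂ) + (0:ℤ) / 2) * ((1:ℤ):ℂ)) + (k:ℂ) * (2 * Real.pi * I) := by
    push_cast
    linear_combination (Real.pi : ℂ) * I * hk
  rw [h, Complex.exp_add, Complex.exp_int_mul_two_pi_mul_I, mul_one]

lemma theta01_T : theta1 0 1 (σ + 1) = theta1 0 0 σ := by
  unfold theta1
  refine tsum_congr fun n => ?_
  obtain ⟨k, hk⟩ := evenk n
  have h : (Real.pi:ℂ) * I * (σ+1) * ((n:ℂ) + (0:ℤ) / 2) ^ 2 +
      Real.pi * I * ((n:ℂ) + (0:ℤ) / 2) * ((1:ℤ):ℂ) =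
      ((Real.pi:ℂ) * I * σ * ((n:ℂ) + (0:ℤ) / 2) ^ 2 +
      Real.pi * I * ((n:ℂ) + (0:ℤ) / 2) * ((0:ℤ):ℂ)) + (((k+n:ℤ)):ℂ) * (2 * Real.pi * I) := by
    push_cast
    linear_combination (Real.pi : ℂ) * I * hk
  rw [h, Complex.exp_add, Complex.exp_int_mul_two_pi_mul_I, mul_one]

lemma theta10_T : theta1 1 0 (σ + 1) = cexp (Real.pi * I / 4) * theta1 1 0 σ := by
  unfold theta1
  rw [← tsum_mul_left]
  refine tsum_congr fun n => ?_
  obtain ⟨k, hk⟩ := evenk n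
  rw [← Complex.exp_add]
  have h : (Real.pi:ℂ) * I * (σ+1) * ((n:ℂ) + (1:ℤ) / 2) ^ 2 +
      Real.pi * I * ((n:ℂ) + (1:ℤ) / 2) * ((0:ℤ):ℂ) =
      ((Real.pi:ℂ) * I / 4 + ((Real.pi:ℂ) * I * σ * ((n:ℂ) + (1:ℤ) / 2) ^ 2 +
      Real.pi * I * ((n:ℂ) + (1:ℤ) / 2) * ((0:ℤ):ℂ))) + (((k+n:ℤ)):ℂ) * (2 * Real.pi * I) := by
    push_cast
    linear_combination (Real.pi : ℂ) * I * hk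
  rw [h, Complex.exp_add, Complex.exp_int_mul_two_pi_mul_I, mul_one]

lemma exp_quarter_sq : cexp (Real.pi * I / 4) ^ 2 = I := by
  rw [sq, ← Complex.exp_add]
  have : (Real.pi:ℂ) * I / 4 + Real.pi * I / 4 = (Real.pi / 2 : ℂ) * I := by ring
  rw [this, Complex.exp_mul_I, Complex.cos_pi_div_two, Complex.sin_pi_div_two]
  ring

lemma Gfun_T : Gfun (σ + 1) = I * Gfun σ := by
  unfold Gfun
  rw [theta00_T, theta01_T, theta10_T, mul_pow, exp_quarter_sq]
  ring

end Translation

section Inversion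

lemma sqrt_sq {σ : ℂ} (hσ : σ ≠ 0) : ((-I * σ) ^ (1/2 : ℂ)) ^ 2 = -I * σ := by
  have hz : -I * σ ≠ 0 := by
    simp [hσ, Complex.I_ne_zero]
  rw [sq, ← Complex.cpow_add _ _ hz]
  norm_num

lemma theta00_S {σ : ℂ} (hσ : σ ≠ 0) :
    theta1 0 0 σ ^ 2 = (1 / (-I * σ)) * theta1 0 0 (-1 / σ) ^ 2 := by
  rw [theta00_eq, theta00_eq, jacobiTheta₂_functional_equation 0 σ]
  simp only [zero_div, ne_eq, OfNat.ofNat_ne_zero, not_false_eq_true, zero_pow, mul_zero,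
    zero_div, Complex.exp_zero, mul_one]
  rw [mul_pow, div_pow, one_pow, sqrt_sq hσ]

lemma theta01_S {σ : ℂ} (hσ : σ ≠ 0) :
    theta1 0 1 σ ^ 2 = (1 / (-I * σ)) * theta1 1 0 (-1 / σ) ^ 2 := by
  have e1 : theta1 0 1 σ = 1 / (-I * σ) ^ (1/2 : ℂ) * theta1 1 0 (-1 / σ) := by
    rw [theta01_eq, theta10_eq, jacobiTheta₂_functional_equation (1/2) σ]
    rw [show (-1 / σ) / 2 = -(1 / 2 / σ) by ring, jacobiTheta₂_neg_left]
    rw [show cexp (-(Real.pi:ℂ) * I * (1/2) ^ 2 / σ) = cexp ((Real.pi:ℂ) * I * (-1/σ) / 4) by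
      congr 1; ring]
    ring
  rw [e1, mul_pow, div_pow, one_pow, sqrt_sq hσ]

lemma theta10_S {σ : ℂ} (hσ : σ ≠ 0) :
    theta1 1 0 σ ^ 2 = (1 / (-I * σ)) * theta1 0 1 (-1 / σ) ^ 2 := by
  have e1 : theta1 1 0 σ = 1 / (-I * σ) ^ (1/2 : ℂ) * theta1 0 1 (-1 / σ) := by
    rw [theta10_eq, theta01_eq, jacobiTheta₂_functional_equation (σ/2) σ]
    rw [show σ / 2 / σ = 1 / 2 by field_simp]
    rw [show (-(Real.pi:ℂ) * I * (σ/2) ^ 2 / σ) = -((Real.pi:ℂ) * I * σ / 4) by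
      field_simp; ring]
    rw [show ((Real.pi:ℂ) * I * σ / 4) = -(-((Real.pi:ℂ) * I * σ / 4)) by ring,
      Complex.exp_neg]
    have hne : cexp (-((Real.pi:ℂ) * I * σ / 4)) ≠ 0 := Complex.exp_ne_zero _
    field_simp
  rw [e1, mul_pow, div_pow, one_pow, sqrt_sq hσ]

lemma Gfun_S {σ : ℂ} (hσ : σ ≠ 0) : Gfun (-1 / σ) = (I * σ ^ 3) * Gfun σ := by
  have hne : (-I * σ) ≠ 0 := by simp [hσ, Complex.I_ne_zero]
  have key : Gfun σ = (1 / (-I * σ)) ^ 3 * Gfun (-1 / σ) := by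
    unfold Gfun
    rw [theta00_S hσ, theta01_S hσ, theta10_S hσ]
    ring
  have h3 : (I * σ ^ 3) * (1 / (-I * σ)) ^ 3 = 1 := by
    rw [div_pow, one_pow]
    rw [show (-I * σ)^3 = -(I^3 * σ^3) by ring]
    rw [show (I:ℂ)^3 = -I by
      rw [pow_succ, Complex.I_sq]; ring]
    field_simp [hσ, Complex.I_ne_zero]
  calc Gfun (-1 / σ) = (I * σ ^ 3) * ((1 / (-I * σ)) ^ 3 * Gfun (-1 / σ)) := by
        rw [← mul_assoc, h3, one_mul]
    _ = (I * σ ^ 3) * Gfun σ := by rw [← key]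

end Inversion
private def Ftab : Nat → ZMod 4
  | 28 => 3
  | 29 => 2
  | 30 => 1
  | 52 => 1
  | 53 => 2
  | 54 => 3
  | 69 => 3
  | 73 => 2
  | 77 => 1
  | 81 => 1
  | 91 => 3
  | 92 => 2
  | 97 => 2
  | 103 => 1
  | 111 => 3
  | 113 => 3
  | 116 => 2
  | 123 => 1
  | 151 => 2
  | 156 => 1
  | 158 => 3
  | 180 => 3
  | 182 => 1
  | 191 => 2
  | 195 => 2
  | 199 => 3
  | 207 => 1
  | 211 => 1
  | 214 => 2
  | 217 => 3
  | 229 => 1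
  | 235 => 2
  | 237 => 3
  | 243 => 3
  | 249 => 1
  | 254 => 2
  | _ => 0

def Ffun (a b c d : ZMod 4) : ZMod 4 := Ftab (a.val * 64 + b.val * 16 + c.val * 4 + d.val)

lemma FT : ∀ A B C D : ZMod 4, A * D - B * C = 1 →
    Ffun (A + C) (B + D) C D = Ffun A B C D + 1 := by decide

lemma FS : ∀ A B C D : ZMod 4, A * D - B * C = 1 →
    Ffun (-C) (-D) A B = Ffun A B C D + 1 := by decide

lemma Fbase1 : ∀ B : ZMod 4, Ffun 1 B 0 1 = B := by decide

lemma Fbase2 : ∀ B : ZMod 4, Ffun 3 B 0 3 = 2 - B := by decide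

lemma Ffinal : ∀ A D : ZMod 4, A * D = 1 → Ffun A 0 0 D = if D = 1 then 0 else 2 := by decide

lemma I4 : (I : ℂ) ^ (4 : ℕ) = 1 := by
  rw [show (4:ℕ) = 2*2 from rfl, pow_mul, Complex.I_sq]; norm_num

lemma Imod (m : ℕ) : (I : ℂ) ^ (m % 4) = I ^ m := by
  conv_rhs => rw [← Nat.div_add_mod m 4]
  rw [pow_add, pow_mul, I4, one_pow, one_mul]

lemma IvalAdd (x y : ZMod 4) : (I : ℂ) ^ ((x + y).val) = I ^ x.val * I ^ y.val := by
  rw [ZMod.val_add, Imod, pow_add]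

lemma IvalAddOne (x : ZMod 4) : (I : ℂ) ^ ((x + 1).val) = I ^ x.val * I := by
  rw [IvalAdd]
  norm_num [show (1 : ZMod 4).val = 1 from rfl]

lemma Izpow (k : ℤ) : (I : ℂ) ^ k = I ^ (((k : ZMod 4)).val) := by
  have h : (((k : ZMod 4)).val : ℤ) = k % 4 := ZMod.val_intCast k
  have h0 : (0:ℤ) ≤ k % 4 := Int.emod_nonneg k (by norm_num)
  have hval : (((k : ZMod 4)).val : ℕ) = (k % 4).toNat := by omega
  calc (I:ℂ)^k = I ^ (4*(k/4) + k % 4) := by rw [Int.mul_ediv_add_emod k 4]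
    _ = ((I:ℂ) ^ (4:ℤ)) ^ (k/4) * I ^ (k % 4) := by
        rw [zpow_add₀ Complex.I_ne_zero, zpow_mul]
    _ = I ^ (k % 4) := by
        rw [show ((4:ℤ)) = ((4:ℕ):ℤ) from rfl, zpow_natCast, I4, one_zpow, one_mul]
    _ = I ^ (((k : ZMod 4)).val) := by
        rw [hval, ← zpow_natCast, Int.toNat_of_nonneg h0]

/-- The main transformation property, as a predicate on integer matrices. -/
def Qprop (a b c d : ℤ) : Prop :=
  a * d - b * c = 1 → ∀ σ : ℂ, 0 < σ.im →
    Gfun (((a:ℂ) * σ + (b:ℂ)) / ((c:ℂ) * σ + (d:ℂ))) =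
      I ^ (Ffun (a : ZMod 4) (b : ZMod 4) (c : ZMod 4) (d : ZMod 4)).val *
        ((c:ℂ) * σ + (d:ℂ)) ^ 3 * Gfun σ

lemma denom_ne (a b c d : ℤ) (hdet : a * d - b * c = 1) {σ : ℂ} (hσ : 0 < σ.im) :
    ((c:ℂ) * σ + (d:ℂ)) ≠ 0 := by
  intro h
  have him := congrArg Complex.im h
  simp only [Complex.add_im, Complex.mul_im, Complex.intCast_im, Complex.intCast_re,
    zero_mul, add_zero, mul_zero, Complex.zero_im] at him
  have hc0 : c = 0 := by
    rcases mul_eq_zero.mp him with hc | h2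
    · exact_mod_cast hc
    · exfalso; rw [h2] at hσ; exact lt_irrefl 0 hσ
  subst hc0
  rw [Int.cast_zero, zero_mul, zero_add] at h
  have hd0 : d = 0 := by exact_mod_cast h
  subst hd0
  simp at hdet

lemma im_div_eq (a b c d : ℤ) (hdet : a * d - b * c = 1) {σ : ℂ} :
    ((((a:ℂ) * σ + (b:ℂ)) / ((c:ℂ) * σ + (d:ℂ)))).im
      = σ.im / Complex.normSq ((c:ℂ) * σ + (d:ℂ)) := by
  have hdetR : (a:ℝ) * d - b * c = 1 := by exact_mod_cast hdet
  rw [Complex.div_im]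
  simp only [Complex.add_re, Complex.add_im, Complex.mul_re, Complex.mul_im,
    Complex.intCast_re, Complex.intCast_im, zero_mul, mul_zero, sub_zero, add_zero, zero_add]
  rw [div_sub_div_same]
  congr 1
  linear_combination σ.im * hdetR

lemma im_div_pos (a b c d : ℤ) (hdet : a * d - b * c = 1) {σ : ℂ} (hσ : 0 < σ.im) :
    0 < ((((a:ℂ) * σ + (b:ℂ)) / ((c:ℂ) * σ + (d:ℂ)))).im := by
  rw [im_div_eq a b c d hdet]
  exact div_pos hσ (Complex.normSq_pos.mpr (denom_ne a b c d hdet hσ))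

lemma detcast {a b c d : ℤ} (hdet : a * d - b * c = 1) :
    (a : ZMod 4) * (d : ZMod 4) - (b : ZMod 4) * (c : ZMod 4) = 1 := by
  have := congrArg (fun x : ℤ => (x : ZMod 4)) hdet
  push_cast at this
  exact this

lemma stepT (a b c d : ℤ) (h : Qprop a b c d) : Qprop (a + c) (b + d) c d := by
  intro hdet σ hσ
  have hdet0 : a * d - b * c = 1 := by linear_combination hdet
  have hd := denom_ne a b c d hdet0 hσ
  have key : (((a + c : ℤ) : ℂ) * σ + ((b + d : ℤ) : ℂ)) / ((c:ℂ) * σ + (d:ℂ))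
      = ((a:ℂ) * σ + (b:ℂ)) / ((c:ℂ) * σ + (d:ℂ)) + 1 := by
    push_cast
    field_simp
    ring
  rw [key, Gfun_T, h hdet0 σ hσ]
  have hF : Ffun ((a + c : ℤ) : ZMod 4) ((b + d : ℤ) : ZMod 4) (c : ZMod 4) (d : ZMod 4)
      = Ffun (a : ZMod 4) (b : ZMod 4) (c : ZMod 4) (d : ZMod 4) + 1 := by
    push_cast
    exact FT _ _ _ _ (detcast hdet0)
  rw [hF, IvalAddOne]
  ring

lemma stepT' (a b c d : ℤ) (h : Qprop (a + c) (b + d) c d) : Qprop a b c d := by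
  intro hdet σ hσ
  have hdet1 : (a + c) * d - (b + d) * c = 1 := by linear_combination hdet
  have hd := denom_ne a b c d hdet hσ
  have key : (((a + c : ℤ) : ℂ) * σ + ((b + d : ℤ) : ℂ)) / ((c:ℂ) * σ + (d:ℂ))
      = ((a:ℂ) * σ + (b:ℂ)) / ((c:ℂ) * σ + (d:ℂ)) + 1 := by
    push_cast
    field_simp
    ring
  have h2 := h hdet1 σ hσ
  rw [key, Gfun_T] at h2
  have hF : Ffun ((a + c : ℤ) : ZMod 4) ((b + d : ℤ) : ZMod 4) (c : ZMod 4) (d : ZMod 4)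
      = Ffun (a : ZMod 4) (b : ZMod 4) (c : ZMod 4) (d : ZMod 4) + 1 := by
    push_cast
    exact FT _ _ _ _ (detcast hdet)
  rw [hF, IvalAddOne] at h2
  apply mul_left_cancel₀ Complex.I_ne_zero
  rw [h2]
  ring

lemma stepS (a b c d : ℤ) (h : Qprop a b c d) : Qprop (-c) (-d) a b := by
  intro hdet σ hσ
  have hdet0 : a * d - b * c = 1 := by linear_combination hdet
  have hd := denom_ne a b c d hdet0 hσ
  have hn : ((a:ℂ) * σ + (b:ℂ)) ≠ 0 := by
    have h2 := denom_ne (-c) (-d) a b hdet hσ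
    exact h2
  have him : 0 < (((a:ℂ) * σ + (b:ℂ)) / ((c:ℂ) * σ + (d:ℂ))).im :=
    im_div_pos a b c d hdet0 hσ
  have hσ'ne : ((a:ℂ) * σ + (b:ℂ)) / ((c:ℂ) * σ + (d:ℂ)) ≠ 0 := by
    intro h0
    rw [h0] at him
    simp at him
  have key : (((-c : ℤ) : ℂ) * σ + ((-d : ℤ) : ℂ)) / ((a:ℂ) * σ + (b:ℂ))
      = -1 / (((a:ℂ) * σ + (b:ℂ)) / ((c:ℂ) * σ + (d:ℂ))) := by
    push_cast
    field_simp
    ring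
  rw [key, Gfun_S hσ'ne, h hdet0 σ hσ]
  have hF : Ffun ((-c : ℤ) : ZMod 4) ((-d : ℤ) : ZMod 4) (a : ZMod 4) (b : ZMod 4)
      = Ffun (a : ZMod 4) (b : ZMod 4) (c : ZMod 4) (d : ZMod 4) + 1 := by
    push_cast
    exact FS _ _ _ _ (detcast hdet0)
  rw [hF, IvalAddOne, div_pow]
  have hd' : σ * (c:ℂ) + d ≠ 0 := by rw [mul_comm]; exact hd
  field_simp

lemma stepTpow (a b c d : ℤ) (h : Qprop a b c d) : ∀ q : ℤ, Qprop (a + q*c) (b + q*d) c d := by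
  intro q
  induction q using Int.induction_on with
  | zero => simpa using h
  | succ k ihk =>
      have h2 := stepT (a + k*c) (b + k*d) c d ihk
      have e1 : a + ((k:ℤ) + 1) * c = (a + k*c) + c := by ring
      have e2 : b + ((k:ℤ) + 1) * d = (b + k*d) + d := by ring
      rw [e1, e2]
      exact h2
  | pred k ihk =>
      have e1 : (a + (-(k:ℤ) - 1)*c) + c = a + (-(k:ℤ))*c := by ring
      have e2 : (b + (-(k:ℤ) - 1)*d) + d = b + (-(k:ℤ))*d := by ring
      apply stepT' (a + (-(k:ℤ) - 1)*c) (b + (-(k:ℤ) - 1)*d) c d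
      rw [e1, e2]
      exact ihk

lemma Gzpow : ∀ (k : ℤ) (σ : ℂ), Gfun (σ + k) = (I:ℂ) ^ k * Gfun σ := by
  intro k
  induction k using Int.induction_on with
  | zero => simp
  | succ k ih =>
      intro σ
      have e : σ + (((k:ℤ) + 1 : ℤ) : ℂ) = (σ + ((k : ℤ) : ℂ)) + 1 := by push_cast; ring
      rw [e, Gfun_T, ih σ, zpow_add₀ Complex.I_ne_zero, zpow_one]
      ring
  | pred k ih =>
      intro σ
      have e : σ + ((-(k:ℤ) : ℤ) : ℂ) = (σ + ((-(k:ℤ) - 1 : ℤ) : ℂ)) + 1 := by push_cast; ring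
      have h2 := ih σ
      rw [e, Gfun_T] at h2
      apply mul_left_cancel₀ Complex.I_ne_zero
      rw [h2, show (-(k:ℤ) : ℤ) = (-(k:ℤ) - 1 : ℤ) + 1 by ring, zpow_add₀ Complex.I_ne_zero, zpow_one]
      ring

lemma Qall (a b c d : ℤ) : Qprop a b c d := by
  suffices H : ∀ n : ℕ, ∀ a b c d : ℤ, c.natAbs = n → Qprop a b c d from
    H c.natAbs a b c d rfl
  intro n
  induction n using Nat.strong_induction_on with
  | _ n ih =>
    intro a b c d hn
    by_cases hc : c = 0
    · subst hc
      intro hdet σ hσ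
      have had : a * d = 1 := by linear_combination hdet
      rcases Int.mul_eq_one_iff_eq_one_or_neg_one.mp had with ⟨ha, hd⟩ | ⟨ha, hd⟩
      · subst ha; subst hd
        have e : ((1:ℤ):ℂ) * σ + (b:ℂ) = σ + (b:ℂ) := by push_cast; ring
        have e2 : ((0:ℤ):ℂ) * σ + ((1:ℤ):ℂ) = 1 := by push_cast; ring
        rw [e, e2, div_one, Gzpow b σ, Izpow]
        have hF : Ffun ((1:ℤ) : ZMod 4) ((b:ℤ) : ZMod 4) ((0:ℤ) : ZMod 4) ((1:ℤ) : ZMod 4)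
            = ((b : ℤ) : ZMod 4) := by push_cast; exact Fbase1 _
        rw [hF]
        ring
      · subst ha; subst hd
        have e : ((-1:ℤ):ℂ) * σ + (b:ℂ) = -(σ + ((-b : ℤ):ℂ)) := by push_cast; ring
        have e2 : ((0:ℤ):ℂ) * σ + ((-1:ℤ):ℂ) = -1 := by push_cast; ring
        rw [e, e2, show -(σ + ((-b : ℤ):ℂ)) / (-1 : ℂ) = σ + ((-b : ℤ):ℂ) by ring,
          Gzpow (-b) σ, Izpow]
        have hF : Ffun ((-1:ℤ) : ZMod 4) ((b:ℤ) : ZMod 4) ((0:ℤ) : ZMod 4) ((-1:ℤ) : ZMod 4)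
            = 2 + (((-b : ℤ)) : ZMod 4) := by
          rw [show ((-1 : ℤ) : ZMod 4) = 3 by decide, show ((0 : ℤ) : ZMod 4) = 0 by decide,
            Fbase2]
          push_cast
          ring
        rw [hF, IvalAdd, show ((2 : ZMod 4)).val = 2 from rfl]
        rw [show (I:ℂ)^(2:ℕ) = -1 from by rw [sq, Complex.I_mul_I]]
        ring
    · set q := a / c with hq
      set r := a % c with hr
      have har : r + q * c = a := by rw [hq, hr, mul_comm]; exact Int.emod_add_mul_ediv a c
      have hrn : r.natAbs < n := by
        have h1 : 0 ≤ r := by rw [hr]; exact Int.emod_nonneg a hc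
        have h2 : r < |c| := by rw [hr]; exact Int.emod_lt_abs a hc
        rw [Int.abs_eq_natAbs] at h2
        rw [← hn]
        omega
      have h1 : Qprop c d (-r) (-(b - q*d)) :=
        ih r.natAbs hrn c d (-r) (-(b - q*d)) (by simp)
      have h2 := stepS c d (-r) (-(b - q*d)) h1
      rw [neg_neg, neg_neg] at h2
      have h3 := stepTpow r (b - q*d) c d h2 q
      rw [show r + q * c = a from har, show (b - q*d) + q*d = b from by ring] at h3
      exact h3

/-- `h` is a modular form of weight `3` for `Γ₀(16)` with nebentypus `χ_{-1}`: for every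
`[[a, b], [c, d]] ∈ SL₂(ℤ)` with `16 ∣ c` and every `τ` in the upper half plane,
`h((aτ + b)/(cτ + d)) = χ_{-1}(d) (cτ + d)³ h(τ)`, where `χ_{-1}(d) = 1` if `d ≡ 1 (mod 4)`
and `χ_{-1}(d) = -1` if `d ≡ 3 (mod 4)`. -/
theorem hForm_modular (a b c d : ℤ) (hdet : a * d - b * c = 1) (hc : (16 : ℤ) ∣ c)
    (τ : ℂ) (hτ : 0 < τ.im) :
    hForm (((a : ℂ) * τ + (b : ℂ)) / ((c : ℂ) * τ + (d : ℂ))) =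
      (if d % 4 = 1 then (1 : ℂ) else -1) * ((c : ℂ) * τ + (d : ℂ)) ^ 3 * hForm τ := by
  obtain ⟨e, he⟩ := hc
  set c₀ : ℤ := 4 * e with hc₀
  have hcc : c = 4 * c₀ := by rw [hc₀, he]; ring
  have hdet' : a * d - (4*b) * c₀ = 1 := by rw [hcc] at hdet; linear_combination hdet
  have hσ : 0 < ((4:ℂ) * τ).im := by
    have h4 : ((4:ℂ) * τ).im = 4 * τ.im := by simp
    rw [h4]; linarith
  have H := Qall a (4*b) c₀ d hdet' ((4:ℂ) * τ) hσ
  have edenom : ((c₀:ℤ):ℂ) * ((4:ℂ)*τ) + (d:ℂ) = (c:ℂ) * τ + (d:ℂ) := by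
    rw [hcc]; push_cast; ring
  have enum : ((a:ℤ):ℂ) * ((4:ℂ)*τ) + (((4*b:ℤ)):ℂ) = 4 * ((a:ℂ)*τ + (b:ℂ)) := by
    push_cast; ring
  rw [edenom, enum] at H
  rw [hForm_eq, hForm_eq,
    show (4:ℂ) * (((a:ℂ)*τ + (b:ℂ)) / ((c:ℂ)*τ + (d:ℂ)))
      = (4 * ((a:ℂ)*τ + (b:ℂ))) / ((c:ℂ)*τ + (d:ℂ)) from by ring, H]
  have hb4 : ((4*b : ℤ) : ZMod 4) = 0 := by
    rw [show ((4*b:ℤ) : ZMod 4) = 4 * (b : ZMod 4) from by push_cast; ring,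
      show (4 : ZMod 4) = 0 from by decide, zero_mul]
  have hc4 : ((c₀ : ℤ) : ZMod 4) = 0 := by
    rw [hc₀, show ((4*e:ℤ) : ZMod 4) = 4 * (e : ZMod 4) from by push_cast; ring,
      show (4 : ZMod 4) = 0 from by decide, zero_mul]
  have had : (a : ZMod 4) * (d : ZMod 4) = 1 := by
    have h2 := detcast hdet'
    rw [hb4, hc4] at h2
    simpa using h2
  have hmul : (I:ℂ) ^ (Ffun ((a:ℤ) : ZMod 4) (((4*b:ℤ)) : ZMod 4) (((c₀:ℤ)) : ZMod 4)
      ((d:ℤ) : ZMod 4)).val = (if d % 4 = 1 then (1:ℂ) else -1) := by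
    rw [hb4, hc4, Ffinal _ _ had]
    have hd13 : (d : ZMod 4) = 1 ∨ (d : ZMod 4) = 3 := by
      have hh : ∀ A D : ZMod 4, A * D = 1 → D = 1 ∨ D = 3 := by decide
      exact hh _ _ had
    have hiff : (d : ZMod 4) = 1 ↔ d % 4 = 1 := by
      constructor
      · intro h
        have h4 : (4:ℤ) ∣ (d - 1) := by
          apply (ZMod.intCast_zmod_eq_zero_iff_dvd (d-1) 4).mp
          push_cast
          rw [h]
          ring
        omega
      · intro h
        have h4 : (4:ℤ) ∣ (d-1) := by omega
        have h5 := (ZMod.intCast_zmod_eq_zero_iff_dvd (d-1) 4).mpr h4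
        push_cast at h5
        linear_combination h5
    rcases hd13 with h | h
    · rw [if_pos h, if_pos (hiff.mp h)]
      norm_num [show ((0 : ZMod 4)).val = 0 from rfl]
    · have hne1 : ¬ (d:ZMod 4) = 1 := by rw [h]; decide
      rw [if_neg hne1, if_neg (fun hh => hne1 (hiff.mpr hh))]
      rw [show ((2 : ZMod 4)).val = 2 from rfl]
      rw [sq, Complex.I_mul_I]
  rw [hmul]
end

section
/- Define w(τ) = θ_{(0,0)}(τ)² · θ_{(0,1)}(τ)² · θ_{(1,0)}(τ)² for τ in the complex upper half plane. Then for every matrix γ = [[a, b], [c, d]] ∈ SL₂(ℤ), lim_{t → ∞} (c·(i t) + d)^{−3} · w((a·(i t) + b)/(c·(i t) + d)) = 0, where t ranges over positive reals. In other words, every SL₂(ℤ)-translate of the weight-3 form w vanishes at the cusp i∞, so w is a cusp form. -/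
open Complex

/-- The weight-3 form `w(τ) = θ_{(0,0)}(τ)² θ_{(0,1)}(τ)² θ_{(1,0)}(τ)²`. -/
noncomputable def wForm (τ : ℂ) : ℂ :=
  theta1 0 0 τ ^ 2 * theta1 0 1 τ ^ 2 * theta1 1 0 τ ^ 2

open Real Filter Topology

/- ### Step 1: identify `theta1` with `jacobiTheta₂` -/

lemma cexp_pi_mul_even {m : ℤ} (hm : Even m) : cexp (Real.pi * I * m) = 1 := by
  obtain ⟨k, hk⟩ := hm
  rw [show (Real.pi : ℂ) * I * m = k * (2 * Real.pi * I) by push_cast [hk]; ring,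
    Complex.exp_int_mul_two_pi_mul_I]

lemma cexp_eq_of_even (A B : ℂ) (m : ℤ) (hm : Even m) (h : A = B + Real.pi * I * m) :
    cexp A = cexp B := by
  rw [h, Complex.exp_add, cexp_pi_mul_even hm, mul_one]

lemma even_sq_sub_self (n : ℤ) : Even (n ^ 2 - n) := by
  rcases Int.even_or_odd n with ⟨k, hk⟩ | ⟨k, hk⟩
  · exact ⟨2 * k ^ 2 - k, by rw [hk]; ring⟩
  · exact ⟨2 * k ^ 2 + k, by rw [hk]; ring⟩

lemma even_sq_add_self (n : ℤ) : Even (n ^ 2 + n) := by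
  have := even_sq_sub_self n
  obtain ⟨k, hk⟩ := this
  exact ⟨k + n, by omega⟩

lemma theta1_zero_eq (b : ℤ) (τ : ℂ) : theta1 0 b τ = jacobiTheta₂ ((b : ℂ) / 2) τ := by
  refine tsum_congr fun n => ?_
  rw [jacobiTheta₂_term]
  congr 1
  push_cast
  ring

lemma theta1_one_eq (τ : ℂ) :
    theta1 1 0 τ = cexp (Real.pi * I * τ / 4) * jacobiTheta₂ (τ / 2) τ := by
  rw [jacobiTheta₂, ← tsum_mul_left]
  refine tsum_congr fun n => ?_
  rw [jacobiTheta₂_term, ← Complex.exp_add]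
  congr 1
  push_cast
  ring

/- ### Step 2: transformation laws -/

lemma theta1_00_T (τ : ℂ) : theta1 0 0 (τ + 1) = theta1 0 1 τ := by
  refine tsum_congr fun n => ?_
  refine cexp_eq_of_even _ _ (n ^ 2 - n) (even_sq_sub_self n) ?_
  push_cast
  ring

lemma theta1_01_T (τ : ℂ) : theta1 0 1 (τ + 1) = theta1 0 0 τ := by
  refine tsum_congr fun n => ?_
  refine cexp_eq_of_even _ _ (n ^ 2 + n) (even_sq_add_self n) ?_
  push_cast
  ring

lemma theta1_10_T (τ : ℂ) :
    theta1 1 0 (τ + 1) = cexp (Real.pi * I / 4) * theta1 1 0 τ := by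
  rw [theta1, theta1, ← tsum_mul_left]
  refine tsum_congr fun n => ?_
  rw [← Complex.exp_add]
  refine cexp_eq_of_even _ _ (n ^ 2 + n) (even_sq_add_self n) ?_
  push_cast
  ring

lemma cexp_pi_mul_I_div_two : cexp (Real.pi * I / 2) = I := by
  rw [show (Real.pi : ℂ) * I / 2 = (↑(Real.pi / 2) : ℂ) * I by push_cast; ring,
    Complex.exp_mul_I, ← Complex.ofReal_cos, ← Complex.ofReal_sin,
    Real.cos_pi_div_two, Real.sin_pi_div_two]
  simp

lemma wForm_T (τ : ℂ) : wForm (τ + 1) = I * wForm τ := by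
  rw [wForm, wForm, theta1_00_T, theta1_01_T, theta1_10_T, mul_pow, ← Complex.exp_nat_mul]
  rw [show ((2 : ℕ) : ℂ) * (Real.pi * I / 4) = Real.pi * I / 2 by push_cast; ring,
    cexp_pi_mul_I_div_two]
  ring

lemma wForm_T_zpow (n : ℤ) (τ : ℂ) : wForm (τ + n) = I ^ n * wForm τ := by
  induction n using Int.induction_on with
  | zero => simp
  | succ n ih =>
    have h1 : τ + ((n + 1 : ℤ) : ℂ) = (τ + (n : ℤ)) + 1 := by push_cast; ring
    rw [h1, wForm_T, ih, ← mul_assoc, ← zpow_one_add₀ I_ne_zero]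
    ring_nf
  | pred n ih =>
    have h1 : (τ + ((-(n : ℤ) - 1 : ℤ) : ℂ)) + 1 = τ + ((-(n : ℤ) : ℤ) : ℂ) := by push_cast; ring
    have h2 := wForm_T (τ + ((-(n : ℤ) - 1 : ℤ) : ℂ))
    rw [h1, ih] at h2
    apply mul_left_cancel₀ I_ne_zero
    rw [← h2, ← mul_assoc, ← zpow_one_add₀ I_ne_zero]
    ring_nf

lemma wForm_S {τ : ℂ} (hτ : 0 < τ.im) : wForm (-1 / τ) = I * τ ^ 3 * wForm τ := by
  have hτ0 : τ ≠ 0 := fun h => by simp [h] at hτ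
  set σ : ℂ := -1 / τ with hσ
  have hσ0 : σ ≠ 0 := div_ne_zero (neg_ne_zero.mpr one_ne_zero) hτ0
  have hback : -1 / σ = τ := by rw [hσ]; field_simp
  have hIσ : -I * σ ≠ 0 := mul_ne_zero (neg_ne_zero.mpr I_ne_zero) hσ0
  set s : ℂ := (-I * σ) ^ ((1 : ℂ) / 2) with hs
  have hs0 : s ≠ 0 := by
    rw [hs, Ne, Complex.cpow_eq_zero_iff]
    tauto
  have hs2 : s ^ 2 = -I * σ := by
    rw [hs, sq, ← Complex.cpow_add _ _ hIσ]
    norm_num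
  have h00 : theta1 0 0 σ = 1 / s * theta1 0 0 τ := by
    rw [theta1_zero_eq, theta1_zero_eq, jacobiTheta₂_functional_equation, hback]
    norm_num
    left
    rw [hs]
    ring_nf
  have h01 : theta1 0 1 σ = 1 / s * theta1 1 0 τ := by
    rw [theta1_zero_eq, jacobiTheta₂_functional_equation, hback, theta1_one_eq]
    have e1 : ((1 : ℤ) : ℂ) / 2 / σ = -(τ / 2) := by
      rw [hσ]; push_cast; field_simp
    have e2 : -(Real.pi : ℂ) * I * (((1 : ℤ) : ℂ) / 2) ^ 2 / σ = Real.pi * I * τ / 4 := by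
      rw [hσ]; push_cast; field_simp; ring_nf
    rw [e1, jacobiTheta₂_neg_left, e2]
    ring
  have h10 : theta1 1 0 σ = 1 / s * theta1 0 1 τ := by
    rw [theta1_one_eq, jacobiTheta₂_functional_equation, hback, theta1_zero_eq]
    have e1 : σ / 2 / σ = ((1 : ℤ) : ℂ) / 2 := by
      push_cast; field_simp
    have e2 : -(Real.pi : ℂ) * I * (σ / 2) ^ 2 / σ = -(Real.pi * I * σ / 4) := by
      field_simp; ring
    rw [e1, e2]
    have e3 : cexp (Real.pi * I * σ / 4) * cexp (-(Real.pi * I * σ / 4)) = 1 := by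
      rw [← Complex.exp_add, add_neg_cancel, Complex.exp_zero]
    linear_combination (1 / s * jacobiTheta₂ (((1 : ℤ) : ℂ) / 2) τ) * e3
  have hI3 : I ^ 3 = -I := by rw [pow_succ, Complex.I_sq]; ring
  have hos : (1 / s) ^ 2 = -(τ * I) := by
    rw [div_pow, one_pow, hs2, hσ]
    field_simp
    rw [Complex.I_sq]; ring
  rw [wForm, wForm, h00, h01, h10,
    show (1 / s * theta1 0 0 τ) ^ 2 * (1 / s * theta1 1 0 τ) ^ 2 * (1 / s * theta1 0 1 τ) ^ 2 =
      (((1 / s) ^ 2) ^ 3) * (theta1 0 0 τ ^ 2 * theta1 1 0 τ ^ 2 * theta1 0 1 τ ^ 2) from by ring,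
    hos, show (-(τ * I)) ^ 3 = -(τ ^ 3 * I ^ 3) from by ring, hI3]
  ring

/- ### Step 3: propagate to all of SL₂(ℤ) -/

def TransfP (a b c d : ℤ) : Prop :=
  ∃ k : ℂ, ∀ τ : ℂ, 0 < τ.im →
    wForm (((a : ℂ) * τ + b) / ((c : ℂ) * τ + d)) = k * ((c : ℂ) * τ + d) ^ 3 * wForm τ

lemma denom_ne_zero {c d : ℤ} (h : ¬(c = 0 ∧ d = 0)) {τ : ℂ} (hτ : 0 < τ.im) :
    (c : ℂ) * τ + d ≠ 0 := by
  rcases eq_or_ne c 0 with hc | hc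
  · have hd : d ≠ 0 := fun hd0 => h ⟨hc, hd0⟩
    subst hc
    simpa using fun h0 => hd (by exact_mod_cast h0)
  · intro h0
    have h1 : (c : ℝ) * τ.im = 0 := by
      have := congrArg Complex.im h0
      simpa using this
    rcases mul_eq_zero.mp h1 with h2 | h2
    · exact hc (by exact_mod_cast h2)
    · exact hτ.ne' h2

lemma det_ne_both_zero {a b c d : ℤ} (h : a * d - b * c = 1) : ¬(c = 0 ∧ d = 0) := by
  rintro ⟨rfl, rfl⟩
  simp at h

lemma im_moebius {a b c d : ℤ} (hdet : a * d - b * c = 1) {τ : ℂ} (hτ : 0 < τ.im) :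
    0 < (((a : ℂ) * τ + b) / ((c : ℂ) * τ + d)).im := by
  have hw : (c : ℂ) * τ + d ≠ 0 := denom_ne_zero (det_ne_both_zero hdet) hτ
  have hnsq : 0 < Complex.normSq ((c : ℂ) * τ + d) := Complex.normSq_pos.mpr hw
  have hdr : (a : ℝ) * d - b * c = 1 := by exact_mod_cast hdet
  rw [Complex.div_im]
  simp only [Complex.add_im, Complex.add_re, Complex.mul_im, Complex.mul_re,
    Complex.intCast_re, Complex.intCast_im]
  rw [div_sub_div_same]
  apply div_pos ?_ hnsq
  ring_nf
  nlinarith [hτ, hdr]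

lemma TransfP_mul {a₁ b₁ c₁ d₁ a₂ b₂ c₂ d₂ : ℤ}
    (h₁ : TransfP a₁ b₁ c₁ d₁) (h₂ : TransfP a₂ b₂ c₂ d₂)
    (hd₁ : a₁ * d₁ - b₁ * c₁ = 1) (hd₂ : a₂ * d₂ - b₂ * c₂ = 1) :
    TransfP (a₁ * a₂ + b₁ * c₂) (a₁ * b₂ + b₁ * d₂) (c₁ * a₂ + d₁ * c₂) (c₁ * b₂ + d₁ * d₂) := by
  obtain ⟨k₁, hk₁⟩ := h₁
  obtain ⟨k₂, hk₂⟩ := h₂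
  refine ⟨k₁ * k₂, fun τ hτ => ?_⟩
  have hdprod : (a₁ * a₂ + b₁ * c₂) * (c₁ * b₂ + d₁ * d₂) -
      (a₁ * b₂ + b₁ * d₂) * (c₁ * a₂ + d₁ * c₂) = 1 := by
    linear_combination (a₂ * d₂ - b₂ * c₂) * hd₁ + hd₂
  set σ : ℂ := ((a₂ : ℂ) * τ + b₂) / ((c₂ : ℂ) * τ + d₂) with hσ
  have hσim : 0 < σ.im := im_moebius hd₂ hτ
  have hw₂ : (c₂ : ℂ) * τ + d₂ ≠ 0 := denom_ne_zero (det_ne_both_zero hd₂) hτ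
  have hw₁ : (c₁ : ℂ) * σ + d₁ ≠ 0 := denom_ne_zero (det_ne_both_zero hd₁) hσim
  have hwprod : ((c₁ * a₂ + d₁ * c₂ : ℤ) : ℂ) * τ + ((c₁ * b₂ + d₁ * d₂ : ℤ) : ℂ) ≠ 0 :=
    denom_ne_zero (det_ne_both_zero hdprod) hτ
  have hden : ((c₁ : ℂ) * σ + d₁) * ((c₂ : ℂ) * τ + d₂) =
      ((c₁ * a₂ + d₁ * c₂ : ℤ) : ℂ) * τ + ((c₁ * b₂ + d₁ * d₂ : ℤ) : ℂ) := by
    rw [hσ]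
    push_cast
    linear_combination (c₁ : ℂ) * div_mul_cancel₀ ((a₂ : ℂ) * τ + b₂) hw₂
  have hcomp : (((a₁ * a₂ + b₁ * c₂ : ℤ) : ℂ) * τ + ((a₁ * b₂ + b₁ * d₂ : ℤ) : ℂ)) /
      (((c₁ * a₂ + d₁ * c₂ : ℤ) : ℂ) * τ + ((c₁ * b₂ + d₁ * d₂ : ℤ) : ℂ)) =
      ((a₁ : ℂ) * σ + b₁) / ((c₁ : ℂ) * σ + d₁) := by
    rw [div_eq_div_iff hwprod hw₁, hσ]
    push_cast
    field_simp
    ring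
  rw [hcomp, hk₁ σ hσim, hk₂ τ hτ, ← hden]
  ring

lemma TransfP_T (n : ℤ) : TransfP 1 n 0 1 := by
  refine ⟨I ^ n, fun τ hτ => ?_⟩
  push_cast
  rw [one_mul, zero_mul, zero_add, div_one, wForm_T_zpow]
  ring

lemma TransfP_T_neg (n : ℤ) : TransfP (-1) n 0 (-1) := by
  refine ⟨-I ^ (-n), fun τ hτ => ?_⟩
  push_cast
  rw [show ((-1 : ℂ) * τ + n) / ((0 : ℂ) * τ + (-1)) = τ + ((-n : ℤ) : ℂ) by push_cast; ring_nf,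
    wForm_T_zpow]
  ring

lemma TransfP_Sinv : TransfP 0 1 (-1) 0 := by
  refine ⟨-I, fun τ hτ => ?_⟩
  push_cast
  rw [show ((0 : ℂ) * τ + 1) / ((-1 : ℂ) * τ + 0) = -1 / τ by ring_nf, wForm_S hτ]
  ring

lemma TransfP_all (a b c d : ℤ) (hdet : a * d - b * c = 1) : TransfP a b c d := by
  suffices H : ∀ N : ℕ, ∀ a b c d : ℤ, c.natAbs = N → a * d - b * c = 1 → TransfP a b c d from
    H c.natAbs a b c d rfl hdet
  intro N
  induction N using Nat.strong_induction_on with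
  | _ N ih =>
    intro a b c d hN hdet
    rcases eq_or_ne c 0 with hc | hc
    · subst hc
      have had : a * d = 1 := by omega
      rcases Int.mul_eq_one_iff_eq_one_or_neg_one.mp had with ⟨rfl, rfl⟩ | ⟨rfl, rfl⟩
      · exact TransfP_T b
      · exact TransfP_T_neg b
    · set q : ℤ := a / c with hq
      set r : ℤ := a % c with hrdef
      have hr : r + c * q = a := by rw [add_comm]; exact Int.mul_ediv_add_emod a c
      have hr0 : 0 ≤ r := Int.emod_nonneg a hc
      have hrlt : r.natAbs < N := by
        rw [← hN]
        rcases lt_trichotomy c 0 with h | h | h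
        · have h2 : a % (-c) < -c := Int.emod_lt_of_pos a (by omega)
          rw [Int.emod_neg] at h2
          omega
        · exact absurd h hc
        · have h2 : a % c < c := Int.emod_lt_of_pos a h
          omega
      have hdet'' : (-c) * (b - q * d) - (-d) * r = 1 := by
        linear_combination hdet + d * hr
      have hIH : TransfP (-c) (-d) r (b - q * d) :=
        ih r.natAbs hrlt (-c) (-d) r (b - q * d) rfl hdet''
      have h1 : TransfP (0 * (-c) + 1 * r) (0 * (-d) + 1 * (b - q * d))
          ((-1) * (-c) + 0 * r) ((-1) * (-d) + 0 * (b - q * d)) :=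
        TransfP_mul TransfP_Sinv hIH (by norm_num) hdet''
      have h1' : TransfP r (b - q * d) c d := by
        have e1 : 0 * (-c) + 1 * r = r := by ring
        have e2 : 0 * (-d) + 1 * (b - q * d) = b - q * d := by ring
        have e3 : (-1) * (-c) + 0 * r = c := by ring
        have e4 : (-1) * (-d) + 0 * (b - q * d) = d := by ring
        rwa [e1, e2, e3, e4] at h1
      have hdetmid : r * d - (b - q * d) * c = 1 := by
        linear_combination hdet + d * hr
      have h2 : TransfP (1 * r + q * c) (1 * (b - q * d) + q * d)
          (0 * r + 1 * c) (0 * (b - q * d) + 1 * d) :=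
        TransfP_mul (TransfP_T q) h1' (by norm_num) hdetmid
      have e1 : 1 * r + q * c = a := by linarith [hr]
      have e2 : 1 * (b - q * d) + q * d = b := by ring
      have e3 : 0 * r + 1 * c = c := by ring
      have e4 : 0 * (b - q * d) + 1 * d = d := by ring
      rwa [e1, e2, e3, e4] at h2

/- ### Step 4: decay of `wForm` on the imaginary axis -/

noncomputable def thetaBound : ℝ := ∑' n : ℤ, rexp (-Real.pi * ((n : ℝ) ^ 2 - |(n : ℝ)|))

lemma summable_thetaBound :
    Summable (fun n : ℤ => rexp (-Real.pi * ((n : ℝ) ^ 2 - |(n : ℝ)|))) := by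
  have := summable_pow_mul_jacobiTheta₂_term_bound (1 / 2 : ℝ) one_pos 0
  refine this.congr fun n => ?_
  push_cast
  norm_num

lemma thetaBound_nonneg : 0 ≤ thetaBound :=
  tsum_nonneg fun n => (Real.exp_pos _).le

lemma jacobiTheta₂_norm_le {z τ : ℂ} (hτ : 1 ≤ τ.im) (hz : |z.im| ≤ τ.im / 2) :
    ‖jacobiTheta₂ z τ‖ ≤ thetaBound := by
  have h0 : 0 < τ.im := lt_of_lt_of_le one_pos hτ
  have hb : ∀ n : ℤ, ‖jacobiTheta₂_term n z τ‖ ≤ rexp (-Real.pi * ((n : ℝ) ^ 2 - |(n : ℝ)|)) := by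
    intro n
    refine (norm_jacobiTheta₂_term_le h0 hz le_rfl n).trans ?_
    rw [Real.exp_le_exp]
    push_cast
    have habs : (0 : ℝ) ≤ (n : ℝ) ^ 2 - |(n : ℝ)| := by
      rcases eq_or_ne n 0 with rfl | hn
      · simp
      · have h1 : (1 : ℤ) ≤ |n| := Int.one_le_abs (by omega)
        have h1' : (1 : ℝ) ≤ |(n : ℝ)| := by exact_mod_cast h1
        nlinarith [abs_nonneg ((n : ℝ)), _root_.sq_abs ((n : ℝ))]
    have e : τ.im * (n : ℝ) ^ 2 - 2 * (τ.im / 2) * |(n : ℝ)| =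
        τ.im * ((n : ℝ) ^ 2 - |(n : ℝ)|) := by ring
    rw [e]
    nlinarith [mul_nonneg (mul_nonneg Real.pi_pos.le habs) (sub_nonneg.mpr hτ)]
  have hsum : Summable fun n : ℤ => ‖jacobiTheta₂_term n z τ‖ :=
    Summable.of_nonneg_of_le (fun n => norm_nonneg _) hb summable_thetaBound
  calc ‖jacobiTheta₂ z τ‖ ≤ ∑' n : ℤ, ‖jacobiTheta₂_term n z τ‖ := norm_tsum_le_tsum_norm hsum
    _ ≤ thetaBound := hsum.tsum_le_tsum hb summable_thetaBound

lemma wForm_I_mul_norm_le {t : ℝ} (ht : 1 ≤ t) :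
    ‖wForm (I * t)‖ ≤ thetaBound ^ 6 * rexp (-Real.pi * t / 2) := by
  have him : (I * (t : ℂ)).im = t := by simp
  have ht' : 1 ≤ (I * (t : ℂ)).im := by rw [him]; exact ht
  have h00 : ‖theta1 0 0 (I * t)‖ ≤ thetaBound := by
    rw [theta1_zero_eq]
    refine jacobiTheta₂_norm_le ht' ?_
    rw [him]
    simp
    linarith
  have h01 : ‖theta1 0 1 (I * t)‖ ≤ thetaBound := by
    rw [theta1_zero_eq]
    refine jacobiTheta₂_norm_le ht' ?_
    rw [him]
    simp
    linarith
  have h10 : ‖theta1 1 0 (I * t)‖ ≤ rexp (-Real.pi * t / 4) * thetaBound := by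
    rw [theta1_one_eq, norm_mul]
    have harg : (Real.pi : ℂ) * I * (I * (t : ℂ)) / 4 = ((-Real.pi * t / 4 : ℝ) : ℂ) := by
      rw [show (Real.pi : ℂ) * I * (I * (t : ℂ)) / 4 = (Real.pi : ℂ) * (I * I) * t / 4 by ring,
        Complex.I_mul_I]
      push_cast
      ring
    have h1 : ‖cexp ((Real.pi : ℂ) * I * (I * (t : ℂ)) / 4)‖ = rexp (-Real.pi * t / 4) := by
      rw [harg, Complex.norm_exp_ofReal]
    rw [h1]
    have h2 : ‖jacobiTheta₂ (I * (t : ℂ) / 2) (I * (t : ℂ))‖ ≤ thetaBound := by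
      refine jacobiTheta₂_norm_le ht' ?_
      rw [him]
      have : (I * (t : ℂ) / 2).im = t / 2 := by
        simp [Complex.div_im]
      rw [this]
      exact le_of_eq (_root_.abs_of_nonneg (by linarith))
    exact mul_le_mul_of_nonneg_left h2 (Real.exp_pos _).le
  rw [wForm, norm_mul, norm_mul, norm_pow, norm_pow, norm_pow]
  calc ‖theta1 0 0 (I * t)‖ ^ 2 * ‖theta1 0 1 (I * t)‖ ^ 2 * ‖theta1 1 0 (I * t)‖ ^ 2
      ≤ thetaBound ^ 2 * thetaBound ^ 2 * (rexp (-Real.pi * t / 4) * thetaBound) ^ 2 := by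
        gcongr
    _ = thetaBound ^ 6 * (rexp (-Real.pi * t / 4) * rexp (-Real.pi * t / 4)) := by ring
    _ = thetaBound ^ 6 * rexp (-Real.pi * t / 2) := by
        rw [← Real.exp_add]
        ring_nf

lemma wForm_I_mul_tendsto : Tendsto (fun t : ℝ => wForm (I * t)) atTop (nhds 0) := by
  have hb : ∀ᶠ t : ℝ in atTop, ‖wForm (I * t)‖ ≤ thetaBound ^ 6 * rexp (-Real.pi * t / 2) := by
    filter_upwards [eventually_ge_atTop 1] with t ht
    exact wForm_I_mul_norm_le ht
  refine squeeze_zero_norm' hb ?_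
  have h1 : Tendsto (fun t : ℝ => rexp (-Real.pi * t / 2)) atTop (nhds 0) := by
    have h2 : Tendsto (fun t : ℝ => -Real.pi * t / 2) atTop atBot := by
      have h3 : Tendsto (fun t : ℝ => (Real.pi / 2) * t) atTop atTop :=
        tendsto_id.const_mul_atTop (by positivity)
      exact (tendsto_neg_atTop_atBot.comp h3).congr fun t => by
        show -(Real.pi / 2 * t) = -Real.pi * t / 2
        ring
    exact Real.tendsto_exp_atBot.comp h2
  have := h1.const_mul (thetaBound ^ 6)
  simpa using this

/- ### Main theorem -/

/-- Every `SL₂(ℤ)`-translate of `w` vanishes at the cusp `i∞`: for every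
`[[a, b], [c, d]] ∈ SL₂(ℤ)`,
`lim_{t → ∞} (c(it) + d)⁻³ · w((a(it) + b)/(c(it) + d)) = 0` (so `w` is a cusp form). -/
theorem wForm_cuspidal (a b c d : ℤ) (hdet : a * d - b * c = 1) :
    Filter.Tendsto (fun t : ℝ =>
        ((c : ℂ) * (I * (t : ℂ)) + (d : ℂ)) ^ (-3 : ℤ) *
          wForm (((a : ℂ) * (I * (t : ℂ)) + (b : ℂ)) / ((c : ℂ) * (I * (t : ℂ)) + (d : ℂ))))
      Filter.atTop (nhds 0) := by
  obtain ⟨k, hk⟩ := TransfP_all a b c d hdet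
  have hW : Tendsto (fun t : ℝ => k * wForm (I * t)) atTop (nhds 0) := by
    simpa using wForm_I_mul_tendsto.const_mul k
  refine hW.congr' ?_
  filter_upwards [eventually_ge_atTop (1 : ℝ)] with t ht
  have htpos : (0 : ℝ) < t := lt_of_lt_of_le one_pos ht
  have him : (I * (t : ℂ)).im = t := by simp
  have himpos : 0 < (I * (t : ℂ)).im := by rw [him]; exact htpos
  have hne : (c : ℂ) * (I * (t : ℂ)) + d ≠ 0 := denom_ne_zero (det_ne_both_zero hdet) himpos
  rw [hk (I * (t : ℂ)) himpos, zpow_neg]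
  have h3 : ((c : ℂ) * (I * (t : ℂ)) + d) ^ (3 : ℤ) = ((c : ℂ) * (I * (t : ℂ)) + d) ^ (3 : ℕ) := by
    rw [← zpow_natCast]
    norm_num
  rw [h3]
  linear_combination (-(k * wForm (I * t))) * inv_mul_cancel₀ (pow_ne_zero 3 hne)
end
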